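/- Let d, T ≥ 1 be integers, L > 0, and λ ≥ max{1, L²}. Let x_1, …, x_T ∈ ℝ^d satisfy ‖x_i‖₂ ≤ L for all i, and define V_t := λ I_d + Σ_{i=1}^{t-1} x_i x_iᵀ for t = 1, …, T. Then Σ_{i=1}^T ‖x_i‖_{V_i^{-1}} ≤ √( T · Σ_{i=1}^T ‖x_i‖²_{V_i^{-1}} ) ≤ √( 2 T d log(1 + T L² / (d λ)) ). -/

import Mathlib

open Matrix Finset

/-- Weighted norm ‖x‖_V := √(xᵀ V x). -/
noncomputable def wnorm {d : ℕ} (V : Matrix (Fin d) (Fin d) ℝ) (x : Fin d → ℝ) : ℝ :=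
  Real.sqrt (x ⬝ᵥ (V *ᵥ x))

/-- Euclidean norm on ℝ^d. -/
noncomputable def enorm2 {d : ℕ} (x : Fin d → ℝ) : ℝ :=
  Real.sqrt (∑ i, (x i) ^ 2)


lemma aux_log_lb {u : ℝ} (h0 : 0 ≤ u) (h1 : u ≤ 1) : u / 2 ≤ Real.log (1 + u) := by
  have hpos : (0:ℝ) < 1 + u := by linarith
  have h2 := Real.one_sub_inv_le_log_of_pos hpos
  have h3 : (1+u)⁻¹ ≤ 1 - u/2 := by
    rw [inv_eq_one_div, div_le_iff₀ hpos]; nlinarith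
  linarith

lemma aux_vecMulVec_psd {d : ℕ} (v : Fin d → ℝ) : (vecMulVec v v).PosSemidef := by
  have := Matrix.posSemidef_conjTranspose_mul_self (Matrix.replicateRow Unit v)
  simpa [Matrix.vecMulVec_eq Unit, Matrix.conjTranspose_replicateRow] using this

lemma aux_sum_psd {d : ℕ} (t : ℕ) (x : ℕ → Fin d → ℝ) :
    (∑ i ∈ Finset.range t, vecMulVec (x i) (x i)).PosSemidef := by
  classical
  refine Finset.sum_induction _ _ (fun a b ha hb => ha.add hb) Matrix.PosSemidef.zero
    (fun i _ => aux_vecMulVec_psd (x i))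

lemma aux_smul_one_pd {d : ℕ} {lam : ℝ} (h : 0 < lam) :
    (lam • (1 : Matrix (Fin d) (Fin d) ℝ)).PosDef := by
  have : lam • (1 : Matrix (Fin d) (Fin d) ℝ) = Matrix.diagonal (fun _ => lam) := by
    ext i j; by_cases h : i = j <;> simp [Matrix.diagonal, Matrix.one_apply, h]
  rw [this]
  exact Matrix.PosDef.diagonal (fun _ => h)

lemma aux_quad_inv_nonneg {d : ℕ} {M : Matrix (Fin d) (Fin d) ℝ} (hM : M.PosDef)
    (z : Fin d → ℝ) : 0 ≤ z ⬝ᵥ (M⁻¹ *ᵥ z) := by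
  simpa using hM.inv.posSemidef.dotProduct_mulVec_nonneg z

lemma aux_quad_inv_le {d : ℕ} {lam : ℝ} (hlam : 0 < lam)
    {M S : Matrix (Fin d) (Fin d) ℝ} (hS : S.PosSemidef)
    (hM : M = lam • (1 : Matrix (Fin d) (Fin d) ℝ) + S) (z : Fin d → ℝ) :
    z ⬝ᵥ (M⁻¹ *ᵥ z) ≤ (z ⬝ᵥ z) / lam := by
  have hMpd : M.PosDef := hM ▸ (aux_smul_one_pd hlam).add_posSemidef hS
  set y := M⁻¹ *ᵥ z with hy
  have hMy : M *ᵥ y = z := by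
    rw [hy, mulVec_mulVec, Matrix.mul_nonsing_inv _ hMpd.det_pos.ne'.isUnit, one_mulVec]
  have h1 : y ⬝ᵥ (M *ᵥ y) = z ⬝ᵥ y := by rw [hMy, dotProduct_comm]
  have h2 : lam * (y ⬝ᵥ y) ≤ y ⬝ᵥ (M *ᵥ y) := by
    have hSy : 0 ≤ y ⬝ᵥ (S *ᵥ y) := by simpa using hS.dotProduct_mulVec_nonneg y
    rw [hM, add_mulVec, dotProduct_add, smul_mulVec, one_mulVec, dotProduct_smul]
    simpa using hSy
  have hCS : (z ⬝ᵥ y) ^ 2 ≤ (z ⬝ᵥ z) * (y ⬝ᵥ y) := by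
    have := Finset.sum_mul_sq_le_sq_mul_sq Finset.univ z y
    simpa [dotProduct, pow_two] using this
  have hu0 : 0 ≤ z ⬝ᵥ y := aux_quad_inv_nonneg hMpd z
  have hzz : 0 ≤ z ⬝ᵥ z := by
    simpa using dotProduct_star_self_nonneg z
  rcases eq_or_lt_of_le hu0 with h | h
  · rw [← h]; positivity
  · rw [le_div_iff₀ hlam]
    have hyy : lam * (y ⬝ᵥ y) ≤ z ⬝ᵥ y := h1 ▸ h2
    nlinarith [hCS, h, hyy]

lemma aux_det_rec {d : ℕ} {M : Matrix (Fin d) (Fin d) ℝ} (hM : M.PosDef) (v : Fin d → ℝ) :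
    (M + vecMulVec v v).det = M.det * (1 + v ⬝ᵥ (M⁻¹ *ᵥ v)) := by
  rw [Matrix.vecMulVec_eq Unit, Matrix.det_add_replicateCol_mul_replicateRow hM.det_pos.ne'.isUnit]
  congr 1
  rw [det_unique]
  simp [Matrix.add_apply, Matrix.one_apply_eq, Matrix.mul_apply, Matrix.row_apply,
    Matrix.col_apply, dotProduct, Matrix.mulVec, Finset.sum_mul, Finset.mul_sum,
    mul_assoc]
  rw [Finset.sum_comm]

lemma aux_trace_eq_sum_eigs {d : ℕ} {M : Matrix (Fin d) (Fin d) ℝ} (hM : M.IsHermitian) :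
    M.trace = ∑ i, hM.eigenvalues i := by
  have h1 : (star (hM.eigenvectorUnitary : Matrix (Fin d) (Fin d) ℝ)) *
      (hM.eigenvectorUnitary : Matrix (Fin d) (Fin d) ℝ) = 1 :=
    Matrix.mem_unitaryGroup_iff'.mp (hM.eigenvectorUnitary).2
  conv_lhs => rw [hM.spectral_theorem]
  rw [Unitary.conjStarAlgAut_apply, Matrix.trace_mul_cycle, h1, Matrix.one_mul, Matrix.trace_diagonal]
  simp

lemma aux_logdet_le {d : ℕ} (hd : 1 ≤ d) {M : Matrix (Fin d) (Fin d) ℝ} (hM : M.PosDef) :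
    Real.log M.det ≤ d * Real.log (M.trace / d) := by
  have hd0 : (0:ℝ) < d := by exact_mod_cast hd
  have hdet : M.det = ∏ i, hM.isHermitian.eigenvalues i := by
    simpa using hM.isHermitian.det_eq_prod_eigenvalues
  have hpos : ∀ i, 0 < hM.isHermitian.eigenvalues i := hM.eigenvalues_pos
  have hjen := (strictConcaveOn_log_Ioi.concaveOn).le_map_sum
    (t := Finset.univ) (w := fun _ : Fin d => (d : ℝ)⁻¹)
    (p := hM.isHermitian.eigenvalues) (fun i _ => by positivity)
    (by simp only [Finset.sum_const, Finset.card_univ, Fintype.card_fin, nsmul_eq_mul]; exact mul_inv_cancel₀ hd0.ne') (fun i _ => Set.mem_Ioi.mpr (hpos i))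
  have htr : ∑ i, (d:ℝ)⁻¹ • hM.isHermitian.eigenvalues i = M.trace / d := by
    rw [aux_trace_eq_sum_eigs hM.isHermitian, ← Finset.smul_sum]
    simp [div_eq_inv_mul]
  rw [htr] at hjen
  have hsum : ∑ i, (d:ℝ)⁻¹ • Real.log (hM.isHermitian.eigenvalues i)
      = (d:ℝ)⁻¹ * ∑ i, Real.log (hM.isHermitian.eigenvalues i) := by
    rw [← Finset.smul_sum]; simp
  rw [hsum] at hjen
  rw [hdet, Real.log_prod (fun i _ => (hpos i).ne')]
  calc ∑ i, Real.log (hM.isHermitian.eigenvalues i)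
      = (d:ℝ) * ((d:ℝ)⁻¹ * ∑ i, Real.log (hM.isHermitian.eigenvalues i)) := by
        field_simp
    _ ≤ (d:ℝ) * Real.log (M.trace / d) := by
        exact mul_le_mul_of_nonneg_left hjen hd0.le

theorem sum_self_normalized_bound (d T : ℕ) (hd : 1 ≤ d) (hT : 1 ≤ T)
    (L lam : ℝ) (hL : 0 < L) (hlam : max 1 (L ^ 2) ≤ lam)
    (x : ℕ → Fin d → ℝ) (hx : ∀ i < T, enorm2 (x i) ≤ L)
    (V : ℕ → Matrix (Fin d) (Fin d) ℝ)
    (hV : ∀ t, V t = lam • (1 : Matrix (Fin d) (Fin d) ℝ) +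
      ∑ i ∈ Finset.range t, vecMulVec (x i) (x i)) :
    (∑ t ∈ Finset.range T, wnorm (V t)⁻¹ (x t)) ≤
        Real.sqrt ((T : ℝ) * ∑ t ∈ Finset.range T, (wnorm (V t)⁻¹ (x t)) ^ 2) ∧
      Real.sqrt ((T : ℝ) * ∑ t ∈ Finset.range T, (wnorm (V t)⁻¹ (x t)) ^ 2) ≤
        Real.sqrt (2 * (T : ℝ) * (d : ℝ) *
          Real.log (1 + (T : ℝ) * L ^ 2 / ((d : ℝ) * lam))) := by
  have hlam1 : (1:ℝ) ≤ lam := le_trans (le_max_left _ _) hlam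
  have hlamL : L ^ 2 ≤ lam := le_trans (le_max_right _ _) hlam
  have hlam0 : (0:ℝ) < lam := lt_of_lt_of_le one_pos hlam1
  have hd0 : (0:ℝ) < d := by exact_mod_cast hd
  set u : ℕ → ℝ := fun t => x t ⬝ᵥ ((V t)⁻¹ *ᵥ x t) with hu
  have hVpd : ∀ t, (V t).PosDef := fun t =>
    (hV t) ▸ (aux_smul_one_pd hlam0).add_posSemidef (aux_sum_psd t x)
  have hu0 : ∀ t, 0 ≤ u t := fun t => aux_quad_inv_nonneg (hVpd t) (x t)
  have hwn2 : ∀ t, wnorm (V t)⁻¹ (x t) ^ 2 = u t := fun t => Real.sq_sqrt (hu0 t)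
  have hwn : ∀ t, wnorm (V t)⁻¹ (x t) = Real.sqrt (u t) := fun t => rfl
  -- Part 1 : Cauchy-Schwarz
  have part1 : (∑ t ∈ Finset.range T, wnorm (V t)⁻¹ (x t)) ≤
      Real.sqrt ((T : ℝ) * ∑ t ∈ Finset.range T, (wnorm (V t)⁻¹ (x t)) ^ 2) := by
    have hs0 : 0 ≤ ∑ t ∈ Finset.range T, wnorm (V t)⁻¹ (x t) :=
      Finset.sum_nonneg fun t _ => by rw [hwn]; exact Real.sqrt_nonneg _
    rw [show ((T:ℝ)) = ((Finset.range T).card : ℝ) by simp]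
    have hps : (0:ℝ) ≤ ((Finset.range T).card : ℝ) * ∑ t ∈ Finset.range T, (wnorm (V t)⁻¹ (x t)) ^ 2 := by
      have : (0:ℝ) ≤ ∑ t ∈ Finset.range T, (wnorm (V t)⁻¹ (x t)) ^ 2 :=
        Finset.sum_nonneg fun t _ => sq_nonneg _
      positivity
    exact (Real.le_sqrt hs0 hps).mpr (by exact_mod_cast sq_sum_le_card_mul_sum_sq (s := Finset.range T) (f := fun t => wnorm (V t)⁻¹ (x t)))
  refine ⟨part1, ?_⟩
  -- bounds on u
  have hxL : ∀ t < T, x t ⬝ᵥ x t ≤ L ^ 2 := by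
    intro t ht
    have h1 := hx t ht
    have h2 : (0:ℝ) ≤ ∑ i, (x t i) ^ 2 := Finset.sum_nonneg fun i _ => sq_nonneg _
    have h3 : ∑ i, (x t i) ^ 2 ≤ L ^ 2 := by
      have := Real.sqrt_le_sqrt (le_of_eq (rfl : enorm2 (x t) = enorm2 (x t)))
      calc ∑ i, (x t i) ^ 2 = Real.sqrt (∑ i, (x t i) ^ 2) ^ 2 := (Real.sq_sqrt h2).symm
        _ ≤ L ^ 2 := by
          apply pow_le_pow_left₀ (Real.sqrt_nonneg _) h1
    simpa [dotProduct, pow_two] using h3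
  have hu1 : ∀ t < T, u t ≤ 1 := by
    intro t ht
    have h1 : u t ≤ (x t ⬝ᵥ x t) / lam :=
      aux_quad_inv_le hlam0 (aux_sum_psd t x) (hV t) (x t)
    have h2 : (x t ⬝ᵥ x t) / lam ≤ L ^ 2 / lam := by
      gcongr
      exact hxL t ht
    have h3 : L ^ 2 / lam ≤ 1 := (div_le_one hlam0).mpr hlamL
    linarith
  -- determinant recursion
  have hstep : ∀ t, V (t+1) = V t + vecMulVec (x t) (x t) := by
    intro t; rw [hV (t+1), hV t, Finset.sum_range_succ, add_assoc]
  have hdet : ∀ t, (V (t+1)).det = (V t).det * (1 + u t) := by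
    intro t; rw [hstep t]; exact aux_det_rec (hVpd t) (x t)
  -- telescoping log-det
  have hlogdet : ∀ n : ℕ, ∑ t ∈ Finset.range n, Real.log (1 + u t)
      = Real.log ((V n).det) - d * Real.log lam := by
    intro n
    induction n with
    | zero =>
      simp [hV 0, Matrix.det_smul]
    | succ n ih =>
      rw [Finset.sum_range_succ, ih, hdet n,
        Real.log_mul (hVpd n).det_pos.ne' (by nlinarith [hu0 n])]
      ring
  -- trace computations
  have htr_vec : ∀ i, (vecMulVec (x i) (x i)).trace = x i ⬝ᵥ x i := by
    intro i
    simp [Matrix.trace, Matrix.diag, Matrix.vecMulVec_apply, dotProduct]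
  have htr_nonneg : ∀ i, 0 ≤ (vecMulVec (x i) (x i)).trace := by
    intro i
    rw [htr_vec i]
    simpa using dotProduct_star_self_nonneg (x i)
  have htrV : ∀ n, (V n).trace = lam * d + ∑ i ∈ Finset.range n, (vecMulVec (x i) (x i)).trace := by
    intro n
    rw [hV n, Matrix.trace_add, Matrix.trace_smul, Matrix.trace_one, Matrix.trace_sum]
    simp [Fintype.card_fin]
  have htrace : (V T).trace ≤ d * lam + T * L ^ 2 := by
    rw [htrV T]
    have h2 : ∑ i ∈ Finset.range T, (vecMulVec (x i) (x i)).trace ≤ T * L ^ 2 := by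
      calc ∑ i ∈ Finset.range T, (vecMulVec (x i) (x i)).trace
          ≤ ∑ i ∈ Finset.range T, L ^ 2 := by
            apply Finset.sum_le_sum
            intro i hi
            rw [htr_vec i]
            exact hxL i (Finset.mem_range.mp hi)
        _ = T * L ^ 2 := by simp [Finset.sum_const, Finset.card_range]
    linarith
  have htrpos : 0 < (V T).trace := by
    rw [htrV T]
    have := Finset.sum_nonneg (fun i (_ : i ∈ Finset.range T) => htr_nonneg i)
    nlinarith
  -- main bound on the sum of u
  have key : ∑ t ∈ Finset.range T, u t ≤ 2 * d * Real.log (1 + T * L ^ 2 / (d * lam)) := by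
    have h1 : ∑ t ∈ Finset.range T, u t ≤ 2 * ∑ t ∈ Finset.range T, Real.log (1 + u t) := by
      rw [Finset.mul_sum]
      apply Finset.sum_le_sum
      intro t ht
      have := aux_log_lb (hu0 t) (hu1 t (Finset.mem_range.mp ht))
      linarith
    rw [hlogdet T] at h1
    have h2 : Real.log ((V T).det) ≤ d * Real.log ((V T).trace / d) :=
      aux_logdet_le hd (hVpd T)
    have h3 : Real.log ((V T).trace / d) ≤ Real.log ((d * lam + T * L ^ 2) / d) := by
      apply Real.log_le_log (by positivity)
      gcongr
    have h4 : Real.log ((d * lam + T * L ^ 2) / d) - Real.log lam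
        = Real.log (1 + T * L ^ 2 / (d * lam)) := by
      rw [← Real.log_div (by positivity) (ne_of_gt hlam0)]
      congr 1
      field_simp
    have h5 : (d:ℝ) * Real.log ((V T).trace / d) ≤ d * Real.log ((d * lam + T * L ^ 2) / d) :=
      mul_le_mul_of_nonneg_left h3 hd0.le
    nlinarith [h1, h2, h5]
  -- conclude
  have hsum_eq : ∑ t ∈ Finset.range T, (wnorm (V t)⁻¹ (x t)) ^ 2 = ∑ t ∈ Finset.range T, u t :=
    Finset.sum_congr rfl fun t _ => hwn2 t
  rw [hsum_eq]
  apply Real.sqrt_le_sqrt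
  have hT0 : (0:ℝ) ≤ T := by positivity
  calc (T:ℝ) * ∑ t ∈ Finset.range T, u t
      ≤ (T:ℝ) * (2 * d * Real.log (1 + (T:ℝ) * L ^ 2 / (d * lam))) :=
        mul_le_mul_of_nonneg_left key hT0
    _ = 2 * (T:ℝ) * d * Real.log (1 + (T:ℝ) * L ^ 2 / (d * lam)) := by ring
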